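/- Let m ≥ 0 be an integer, c ∈ ℝ, and define Φ : ℂ∖{0} → ℝ³ = ℝ² × ℝ by Φ(z) = (z^{m+1}, c), where z^{m+1} ∈ ℂ is identified with a point of ℝ². Suppose δ_k → 0⁺, ρ_k → +∞, and φ_k : {z ∈ ℂ : δ_k < |z| < ρ_k} → ℝ³ are smooth injective immersions (embeddings) such that φ_k converges to Φ in C¹ on every compact subset of ℂ∖{0}. Suppose in addition there exist 0 < a < b such that for all sufficiently large k, {z in the domain of φ_k : 1/4 ≤ |(φ_k¹(z), φ_k²(z))| ≤ 4} ⊆ {z : a ≤ |z| ≤ b}, where (φ_k¹, φ_k²) are the first two components of φ_k. Then m = 0. -/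

import Mathlib

open MeasureTheory Filter Metric Topology Real

noncomputable section

/-- We model ℝ³ as `Fin 3 → ℝ`. -/
abbrev V3 := Fin 3 → ℝ

/-- The Euclidean dot product on ℝ³. -/
def dot3 (a b : V3) : ℝ := a 0 * b 0 + a 1 * b 1 + a 2 * b 2

/-- The Euclidean norm on ℝ³. -/
def nrm3 (a : V3) : ℝ := Real.sqrt (dot3 a a)

/-- The cross product on ℝ³. -/
def cross3 (a b : V3) : V3 :=
  ![a 1 * b 2 - a 2 * b 1, a 2 * b 0 - a 0 * b 2, a 0 * b 1 - a 1 * b 0]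

/-- The partial derivative ∂ₓ f, identifying ℂ with ℝ². -/
def pdx (f : ℂ → V3) (z : ℂ) : V3 := fderiv ℝ f z 1

/-- The partial derivative ∂_y f, identifying ℂ with ℝ². -/
def pdy (f : ℂ → V3) (z : ℂ) : V3 := fderiv ℝ f z Complex.I

/-- The conformal factor u, defined by e^{2u} = |∂ₓ f|². -/
def confFactor (f : ℂ → V3) (z : ℂ) : ℝ := Real.log (dot3 (pdx f z) (pdx f z)) / 2

/-- The unit normal n = (∂ₓ f × ∂_y f)/|∂ₓ f × ∂_y f|. -/
def unitNormal (f : ℂ → V3) (z : ℂ) : V3 :=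
  (nrm3 (cross3 (pdx f z) (pdy f z)))⁻¹ • cross3 (pdx f z) (pdy f z)

/-- A_{xx} = (∂ₓ∂ₓ f)·n. -/
def Axx (f : ℂ → V3) (z : ℂ) : ℝ := dot3 (pdx (pdx f) z) (unitNormal f z)

/-- A_{xy} = (∂_y∂ₓ f)·n. -/
def Axy (f : ℂ → V3) (z : ℂ) : ℝ := dot3 (pdy (pdx f) z) (unitNormal f z)

/-- A_{yy} = (∂_y∂_y f)·n. -/
def Ayy (f : ℂ → V3) (z : ℂ) : ℝ := dot3 (pdy (pdy f) z) (unitNormal f z)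

/-- |A|² = e^{-4u}(A_{xx}² + 2A_{xy}² + A_{yy}²). -/
def normA2 (f : ℂ → V3) (z : ℂ) : ℝ :=
  Real.exp (-4 * confFactor f z) * (Axx f z ^ 2 + 2 * Axy f z ^ 2 + Ayy f z ^ 2)

/-- The mean curvature H = e^{-2u}(A_{xx} + A_{yy}). -/
def meanH (f : ℂ → V3) (z : ℂ) : ℝ := Real.exp (-2 * confFactor f z) * (Axx f z + Ayy f z)

/-- The Gauss curvature K = e^{-4u}(A_{xx}A_{yy} − A_{xy}²). -/
def gaussK (f : ℂ → V3) (z : ℂ) : ℝ :=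
  Real.exp (-4 * confFactor f z) * (Axx f z * Ayy f z - Axy f z ^ 2)

/-- The flat Laplacian ∂ₓ² + ∂_y² of a scalar function on ℂ ≅ ℝ². -/
def lap (h : ℂ → ℝ) (z : ℂ) : ℝ :=
  fderiv ℝ (fun w => fderiv ℝ h w 1) z 1 +
    fderiv ℝ (fun w => fderiv ℝ h w Complex.I) z Complex.I

/-- A smooth conformal immersion on an open set U ⊆ ℂ:
∂ₓ f · ∂_y f = 0 and |∂ₓ f| = |∂_y f| > 0 everywhere on U. -/
def ConformalImmersionOn (f : ℂ → V3) (U : Set ℂ) : Prop :=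
  ContDiffOn ℝ (⊤ : ℕ∞) f U ∧ ∀ z ∈ U,
    dot3 (pdx f z) (pdy f z) = 0 ∧ nrm3 (pdx f z) = nrm3 (pdy f z) ∧ 0 < nrm3 (pdx f z)

/-- The Willmore equation e^{-2u}Δ H + ½(H² − 4K)H = 0 on U. -/
def WillmoreOn (f : ℂ → V3) (U : Set ℂ) : Prop :=
  ∀ z ∈ U,
    Real.exp (-2 * confFactor f z) * lap (meanH f) z +
      (1 / 2) * (meanH f z ^ 2 - 4 * gaussK f z) * meanH f z = 0

/-- The induced area density e^{2u} (so that dμ = e^{2u} dL²). -/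
def areaDensity (f : ℂ → V3) (z : ℂ) : ENNReal :=
  ENNReal.ofReal (Real.exp (2 * confFactor f z))

/-- Finite total curvature: ∫_U |A|² dμ < ∞. -/
def FiniteTotalCurvature (f : ℂ → V3) (U : Set ℂ) : Prop :=
  ∫⁻ z in U, ENNReal.ofReal (normA2 f z) * areaDensity f z < ⊤

/-- A piecewise C¹ curve on [0,1): continuous, and differentiable away from a finite set. -/
def PiecewiseC1 (γ : ℝ → ℂ) : Prop :=
  ContinuousOn γ (Set.Ico 0 1) ∧
    ∃ S : Finset ℝ, ∀ t ∈ Set.Ico (0 : ℝ) 1, t ∉ S → DifferentiableAt ℝ γ t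

/-- Completeness (at infinity) of the induced metric: every piecewise C¹ curve
γ : [0,1) → U with |γ(t)| → ∞ as t → 1 has infinite length. -/
def CompleteOn (f : ℂ → V3) (U : Set ℂ) : Prop :=
  ∀ γ : ℝ → ℂ, PiecewiseC1 γ → (∀ t ∈ Set.Ico (0 : ℝ) 1, γ t ∈ U) →
    Tendsto (fun t => ‖γ t‖) (𝓝[<] (1 : ℝ)) atTop →
    ∫⁻ t in Set.Ico (0 : ℝ) 1,
      ENNReal.ofReal (Real.exp (confFactor f (γ t)) * ‖deriv γ t‖) = ⊤

/-- The image area measure of `f` (restricted to `U`) has density 1 at infinity: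
μ({z ∈ U : |f(z)| < ρ})/(π ρ²) → 1 as ρ → ∞. -/
def DensityOneAtInfinity (f : ℂ → V3) (U : Set ℂ) : Prop :=
  Tendsto (fun ρ : ℝ =>
      (∫⁻ z in {z ∈ U | nrm3 (f z) < ρ}, areaDensity f z).toReal / (π * ρ ^ 2))
    atTop (𝓝 1)


lemma sign_iff_of_ne {g : ℝ → ℝ} {a b : ℝ} (hab : a ≤ b) (hg : Continuous g)
    (hne : ∀ t, g t ≠ 0) : (0 < g a ↔ 0 < g b) := by
  constructor
  · intro h
    by_contra hcon
    push_neg at hcon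
    have hb : g b < 0 := lt_of_le_of_ne hcon (hne b)
    obtain ⟨t, _, ht⟩ := intermediate_value_Icc' hab hg.continuousOn ⟨hb.le, h.le⟩
    exact hne t ht
  · intro h
    by_contra hcon
    push_neg at hcon
    have ha : g a < 0 := lt_of_le_of_ne hcon (hne a)
    obtain ⟨t, _, ht⟩ := intermediate_value_Icc hab hg.continuousOn ⟨ha.le, h.le⟩
    exact hne t ht

lemma powSubOneBound {r : ℝ} {x : ℂ} (hx : ‖x - 1‖ ≤ r) :
    ∀ i : ℕ, ‖x ^ i - 1‖ ≤ (1+r)^i - 1 := by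
  have hr : 0 ≤ r := le_trans (norm_nonneg _) hx
  have hxn : ‖x‖ ≤ 1 + r := by
    have h := norm_add_le (x - 1) 1
    rw [sub_add_cancel, norm_one] at h
    linarith
  intro i
  induction i with
  | zero => simp
  | succ i ih =>
    have h1 : x^(i+1) - 1 = x*(x^i - 1) + (x - 1) := by ring
    rw [h1]
    calc ‖x*(x^i-1) + (x-1)‖ ≤ ‖x‖*‖x^i-1‖ + ‖x-1‖ :=
          (norm_add_le _ _).trans (by rw [norm_mul])
      _ ≤ (1+r)*((1+r)^i - 1) + r := by
          refine add_le_add ?_ hx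
          exact mul_le_mul hxn ih (norm_nonneg _) (by linarith)
      _ = (1+r)^(i+1) - 1 := by ring

lemma prodPowBound {r : ℝ} {x y : ℂ} (hx : ‖x - 1‖ ≤ r) (hy : ‖y - 1‖ ≤ r) (i j : ℕ) :
    ‖x^i * y^j - 1‖ ≤ (1+r)^(i+j) - 1 := by
  have hr : 0 ≤ r := le_trans (norm_nonneg _) hx
  have hxn : ‖x‖ ≤ 1 + r := by
    have h := norm_add_le (x - 1) 1
    rw [sub_add_cancel, norm_one] at h
    linarith
  have hxi : ‖x^i‖ ≤ (1+r)^i := by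
    rw [norm_pow]
    exact pow_le_pow_left₀ (norm_nonneg x) hxn i
  have honepow : (1:ℝ) ≤ (1+r)^i := by
    calc (1:ℝ) = 1^i := (one_pow i).symm
      _ ≤ (1+r)^i := pow_le_pow_left₀ zero_le_one (by linarith) i
  have h1 : x^i*y^j - 1 = x^i*(y^j - 1) + (x^i - 1) := by ring
  rw [h1]
  calc ‖x^i*(y^j - 1) + (x^i - 1)‖ ≤ ‖x^i‖*‖y^j - 1‖ + ‖x^i - 1‖ :=
        (norm_add_le _ _).trans (by rw [norm_mul])
    _ ≤ (1+r)^i*((1+r)^j - 1) + ((1+r)^i - 1) := by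
        refine add_le_add ?_ (powSubOneBound hx i)
        exact mul_le_mul hxi (powSubOneBound hy j) (norm_nonneg _) (by positivity)
    _ = (1+r)^(i+j) - 1 := by rw [pow_add]; ring
lemma sepAux {n : ℕ} (hn : 2 ≤ n) {d : ℕ} (hd1 : 1 ≤ d) (hdn : d < n) :
    4/(n:ℝ) ≤ ‖Complex.exp (((2*π*d/n : ℝ) : ℂ) * Complex.I) - 1‖ := by
  have hnR : (2:ℝ) ≤ n := by exact_mod_cast hn
  have hnpos : (0:ℝ) < n := by linarith
  have hdR : (1:ℝ) ≤ d := by exact_mod_cast hd1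
  have hdnR : (d:ℝ) ≤ (n:ℝ) - 1 := by
    have : (d:ℝ) + 1 ≤ n := by exact_mod_cast hdn
    linarith
  have hπ := Real.pi_pos
  set y : ℝ := 2*π*d/n with hy
  have hy1 : 2*π/n ≤ y := by
    rw [hy, div_le_div_iff₀ hnpos hnpos]
    nlinarith [mul_nonneg (mul_nonneg hπ.le hnpos.le) (by linarith : (0:ℝ) ≤ (d:ℝ) - 1)]
  have hy2 : y ≤ 2*π - 2*π/n := by
    rw [hy]
    rw [div_le_iff₀ hnpos]
    have h2 : (2*π - 2*π/n) * n = 2*π*n - 2*π := by field_simp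
    rw [h2]
    nlinarith [mul_nonneg hπ.le (by linarith : (0:ℝ) ≤ (n:ℝ) - 1 - (d:ℝ))]
  -- rewrite the norm
  have hz : Complex.exp (((y : ℝ) : ℂ) * Complex.I) - 1
      = ((Real.cos y - 1 : ℝ) : ℂ) + ((Real.sin y : ℝ):ℂ) * Complex.I := by
    rw [Complex.exp_mul_I]; push_cast; ring
  have hnorm : ‖Complex.exp (((y : ℝ) : ℂ) * Complex.I) - 1‖
      = Real.sqrt ((Real.cos y - 1)^2 + (Real.sin y)^2) := by
    rw [hz, Complex.norm_add_mul_I]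
  rw [hnorm]
  have hval : (Real.cos y - 1)^2 + (Real.sin y)^2 = 2 - 2 * Real.cos y := by
    nlinarith [Real.sin_sq_add_cos_sq y]
  rw [hval]
  -- cos y ≤ cos (2π/n)
  have hcos : Real.cos y ≤ Real.cos (2*π/n) := by
    rcases le_or_gt y π with h | h
    · exact Real.cos_le_cos_of_nonneg_of_le_pi (by positivity) h hy1
    · have h1 : Real.cos y = Real.cos (2*π - y) := (Real.cos_two_pi_sub y).symm
      rw [h1]
      apply Real.cos_le_cos_of_nonneg_of_le_pi (by positivity)
      · linarith
      · linarith
  -- 2 - 2 cos(2π/n) ≥ 16/n²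
  have hsin : 2/(n:ℝ) ≤ Real.sin (π/n) := by
    have h1 : 2/π * (π/n) ≤ Real.sin (π/n) := by
      apply Real.mul_le_sin (by positivity)
      rw [div_le_div_iff₀ hnpos (by norm_num : (0:ℝ) < 2)]
      nlinarith
    have h2 : 2/π * (π/n) = 2/(n:ℝ) := by field_simp
    linarith [h2 ▸ h1]
  have hsq : Real.sin (π/n)^2 = 1/2 - Real.cos (2*π/n)/2 := by
    have := Real.sin_sq_eq_half_sub (π/n)
    have h2 : 2*(π/n) = 2*π/n := by ring
    rw [h2] at this
    exact this
  have hlow : 16/(n:ℝ)^2 ≤ 2 - 2*Real.cos (2*π/n) := by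
    have h1 : (2/(n:ℝ))^2 ≤ Real.sin (π/n)^2 := by
      apply pow_le_pow_left₀ (by positivity) hsin
    rw [hsq] at h1
    have h2 : (2/(n:ℝ))^2 = 4/(n:ℝ)^2 := by ring
    rw [h2] at h1
    have h3 : 16/(n:ℝ)^2 = 4*(4/(n:ℝ)^2) := by ring
    rw [h3]
    linarith
  have hfin : (4/(n:ℝ))^2 ≤ 2 - 2*Real.cos y := by
    have : (4/(n:ℝ))^2 = 16/(n:ℝ)^2 := by ring
    rw [this]
    linarith
  have := Real.sqrt_le_sqrt hfin
  rwa [Real.sqrt_sq (by positivity)] at this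

set_option maxHeartbeats 4000000 in
/-- If embeddings of annuli δ_k < |z| < ρ_k (δ_k → 0, ρ_k → ∞)
converge in C¹_loc(ℂ∖{0}) to Φ(z) = (z^{m+1}, c), and the preimage of the cylindrical
shell 1/4 ≤ |(φ¹,φ²)| ≤ 4 stays in a fixed annulus a ≤ |z| ≤ b, then m = 0. -/
theorem multiplicity_one_of_embedded_limit (m : ℕ) (c : ℝ)
    (Φ : ℂ → V3) (hΦ : ∀ z : ℂ, Φ z = ![(z ^ (m + 1)).re, (z ^ (m + 1)).im, c])
    (δ ρ : ℕ → ℝ) (hδpos : ∀ k, 0 < δ k)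
    (hδ : Tendsto δ atTop (𝓝 0)) (hρ : Tendsto ρ atTop atTop)
    (φ : ℕ → ℂ → V3)
    (hφsmooth : ∀ k, ContDiffOn ℝ (⊤ : ℕ∞) (φ k) {z : ℂ | δ k < ‖z‖ ∧ ‖z‖ < ρ k})
    (hφinj : ∀ k, Set.InjOn (φ k) {z : ℂ | δ k < ‖z‖ ∧ ‖z‖ < ρ k})
    (hφimm : ∀ k, ∀ z ∈ {z : ℂ | δ k < ‖z‖ ∧ ‖z‖ < ρ k},
      Function.Injective (fderiv ℝ (φ k) z))
    (hC1 : ∀ K : Set ℂ, IsCompact K → K ⊆ {(0 : ℂ)}ᶜ →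
      TendstoUniformlyOn (fun k => φ k) Φ atTop K ∧
      TendstoUniformlyOn (fun k z => fderiv ℝ (φ k) z) (fun z => fderiv ℝ Φ z) atTop K)
    (a b : ℝ) (ha : 0 < a) (hab : a < b)
    (hloc : ∀ᶠ k in atTop, ∀ z : ℂ, δ k < ‖z‖ → ‖z‖ < ρ k →
      1 / 4 ≤ Real.sqrt (φ k z 0 ^ 2 + φ k z 1 ^ 2) →
      Real.sqrt (φ k z 0 ^ 2 + φ k z 1 ^ 2) ≤ 4 →
      a ≤ ‖z‖ ∧ ‖z‖ ≤ b) :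
    m = 0 := by
  by_contra hm
  obtain ⟨n, hndef⟩ : ∃ n : ℕ, n = m + 1 := ⟨m + 1, rfl⟩
  rw [show m + 1 = n from hndef.symm] at hΦ
  have hn2 : 2 ≤ n := by omega
  have hnR : (2:ℝ) ≤ (n:ℝ) := by exact_mod_cast hn2
  have hnpos : (0:ℝ) < (n:ℝ) := by linarith
  have hnne : (n:ℂ) ≠ 0 := Nat.cast_ne_zero.mpr (by omega)
  have hπ := Real.pi_pos
  set K : Set ℂ := Metric.closedBall (0:ℂ) 2 \ Metric.ball (0:ℂ) (1/2) with hKdef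
  have hmemK : ∀ z : ℂ, z ∈ K ↔ 1/2 ≤ ‖z‖ ∧ ‖z‖ ≤ 2 := by
    intro z
    rw [hKdef]
    simp only [Set.mem_diff, Metric.mem_closedBall, Metric.mem_ball, dist_zero_right, not_lt]
    exact ⟨fun ⟨h1, h2⟩ => ⟨h2, h1⟩, fun ⟨h1, h2⟩ => ⟨h2, h1⟩⟩
  have hKcomp : IsCompact K := (isCompact_closedBall _ _).diff Metric.isOpen_ball
  have hK0 : K ⊆ ({(0:ℂ)}ᶜ) := by
    intro z hz
    have h1 := ((hmemK z).mp hz).1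
    simp only [Set.mem_compl_iff, Set.mem_singleton_iff]
    intro h0
    rw [h0, norm_zero] at h1
    linarith
  obtain ⟨hu0, hu1⟩ := hC1 K hKcomp hK0
  set ε₀ : ℝ := 1/(100*(n:ℝ)) with hε₀def
  have hε₀pos : 0 < ε₀ := by rw [hε₀def]; positivity
  obtain ⟨k, hc0, hc1, hδk, hρk⟩ :=
    ((Metric.tendstoUniformlyOn_iff.mp hu0 ε₀ hε₀pos).and
      ((Metric.tendstoUniformlyOn_iff.mp hu1 ε₀ hε₀pos).and
        ((hδ.eventually (eventually_lt_nhds (by norm_num : (0:ℝ) < 1/2))).and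
          (hρ.eventually_gt_atTop 2)))).exists
  set U : Set ℂ := {z : ℂ | δ k < ‖z‖ ∧ ‖z‖ < ρ k} with hUdef
  have hUopen : IsOpen U := by
    rw [hUdef, Set.setOf_and]
    exact (isOpen_lt continuous_const continuous_norm).inter
      (isOpen_lt continuous_norm continuous_const)
  have hKU : K ⊆ U := by
    intro z hz
    obtain ⟨hz1, hz2⟩ := (hmemK z).mp hz
    rw [hUdef]
    exact ⟨lt_of_lt_of_le hδk hz1, lt_of_le_of_lt hz2 hρk⟩
  have hsm : ContDiffOn ℝ (⊤:ℕ∞) (φ k) U := by rw [hUdef]; exact hφsmooth k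
  have hinjU : Set.InjOn (φ k) U := by rw [hUdef]; exact hφinj k
  have hφcontOn : ContinuousOn (φ k) U := hsm.continuousOn
  -- the projection onto the first two coordinates, as a complex number
  set P : V3 →L[ℝ] ℂ :=
    Complex.ofRealCLM.comp (ContinuousLinearMap.proj 0) +
      Complex.I • (Complex.ofRealCLM.comp (ContinuousLinearMap.proj 1)) with hPdef
  have hPapply : ∀ v : V3, P v = (v 0 : ℂ) + Complex.I * (v 1 : ℂ) := by
    intro v; rw [hPdef]; simp [smul_eq_mul]
  have hPre : ∀ v : V3, (P v).re = v 0 := by intro v; rw [hPapply]; simp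
  have hPim : ∀ v : V3, (P v).im = v 1 := by intro v; rw [hPapply]; simp
  have hPnorm : ‖P‖ ≤ 2 := by
    refine ContinuousLinearMap.opNorm_le_bound _ (by norm_num) (fun v => ?_)
    rw [hPapply v]
    calc ‖(v 0 : ℂ) + Complex.I * (v 1 : ℂ)‖ ≤ ‖(v 0:ℂ)‖ + ‖Complex.I * (v 1:ℂ)‖ :=
          norm_add_le _ _
      _ ≤ ‖v‖ + ‖v‖ := by
          rw [norm_mul, Complex.norm_I, one_mul, Complex.norm_real, Complex.norm_real]
          exact add_le_add (norm_le_pi_norm v 0) (norm_le_pi_norm v 1)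
      _ = 2*‖v‖ := by ring
  set F : ℂ → ℂ := fun z => P (φ k z) with hFdef
  set E : ℂ → ℂ := fun z => F z - z ^ n with hEdef
  have hΦP : ∀ z : ℂ, P (Φ z) = z ^ n := by
    intro z
    rw [hΦ z, hPapply]
    simp only [Matrix.cons_val_zero, Matrix.cons_val_one, Matrix.head_cons]
    rw [mul_comm Complex.I]
    exact Complex.re_add_im _
  have hΦdiff : ∀ z : ℂ, DifferentiableAt ℝ Φ z := by
    have hΦfun : Φ = fun z => ![(z^n).re, (z^n).im, c] := funext hΦ
    intro z
    rw [hΦfun]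
    apply differentiableAt_pi.mpr
    intro i
    fin_cases i <;> simp
    · exact (Complex.reCLM.differentiableAt).comp z ((differentiableAt_pow (𝕜 := ℂ) n).restrictScalars ℝ)
    · exact (Complex.imCLM.differentiableAt).comp z ((differentiableAt_pow (𝕜 := ℂ) n).restrictScalars ℝ)
  have hφdiffU : ∀ z ∈ U, DifferentiableAt ℝ (φ k) z := fun z hz =>
    ((hsm.contDiffAt (hUopen.mem_nhds hz)).differentiableAt (by simp))
  have hFdiffU : ∀ z ∈ U, HasFDerivAt F (P.comp (fderiv ℝ (φ k) z)) z := fun z hz =>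
    (P.hasFDerivAt.comp z (hφdiffU z hz).hasFDerivAt)
  have hGdiff : ∀ z : ℂ, HasFDerivAt (fun w : ℂ => w ^ n) (P.comp (fderiv ℝ Φ z)) z := by
    intro z
    have h1 : HasFDerivAt (fun w => P (Φ w)) (P.comp (fderiv ℝ Φ z)) z :=
      P.hasFDerivAt.comp z (hΦdiff z).hasFDerivAt
    have h2 : (fun w => P (Φ w)) = fun w : ℂ => w ^ n := funext hΦP
    rwa [h2] at h1
  have hEdiffU : ∀ z ∈ U,
      HasFDerivAt E (P.comp (fderiv ℝ (φ k) z) - P.comp (fderiv ℝ Φ z)) z := by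
    intro z hz
    simp only [hEdef]
    exact (hFdiffU z hz).sub (hGdiff z)
  have hE1 : ∀ z ∈ K, ‖P.comp (fderiv ℝ (φ k) z) - P.comp (fderiv ℝ Φ z)‖ ≤ 2*ε₀ := by
    intro z hz
    rw [← ContinuousLinearMap.comp_sub]
    calc ‖P.comp (fderiv ℝ (φ k) z - fderiv ℝ Φ z)‖
        ≤ ‖P‖ * ‖fderiv ℝ (φ k) z - fderiv ℝ Φ z‖ := ContinuousLinearMap.opNorm_comp_le _ _
      _ ≤ 2 * ε₀ := by
          have hd := hc1 z hz
          rw [dist_comm, dist_eq_norm] at hd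
          exact mul_le_mul hPnorm hd.le (norm_nonneg _) (by norm_num)
  have hE0 : ∀ z ∈ K, ‖E z‖ ≤ 2*ε₀ := by
    intro z hz
    have he : E z = P (φ k z - Φ z) := by
      simp only [hEdef, hFdef]
      rw [map_sub, hΦP]
    rw [he]
    calc ‖P (φ k z - Φ z)‖ ≤ ‖P‖ * ‖φ k z - Φ z‖ := P.le_opNorm _
      _ ≤ 2*ε₀ := by
          have hd := hc0 z hz
          rw [dist_comm, dist_eq_norm] at hd
          exact mul_le_mul hPnorm hd.le (norm_nonneg _) (by norm_num)
  -- the radius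
  set r : ℝ := 1/(8*(n:ℝ)) with hrdef
  have hrpos : 0 < r := by rw [hrdef]; positivity
  have hr16 : r ≤ 1/16 := by
    rw [hrdef, div_le_div_iff₀ (by positivity) (by norm_num)]
    linarith
  have hpow : (1+r)^(n-1) ≤ 5/4 := by
    have h1 : (1+r) ≤ Real.exp r := by linarith [Real.add_one_le_exp r]
    have h2 : (1+r)^(n-1) ≤ Real.exp r ^ (n-1) := pow_le_pow_left₀ (by linarith) h1 _
    have h3 : Real.exp r ^ (n-1) = Real.exp (((n-1 : ℕ):ℝ) * r) := by
      rw [Real.exp_nat_mul]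
    have hcast : ((n-1:ℕ):ℝ) = (n:ℝ) - 1 := by
      rw [Nat.cast_sub (by omega)]; norm_num
    have h4 : ((n-1 : ℕ):ℝ) * r ≤ 1/8 := by
      rw [hcast, hrdef, mul_one_div, div_le_div_iff₀ (by positivity) (by norm_num)]
      linarith
    have h5 : Real.exp (((n-1:ℕ):ℝ) * r) ≤ Real.exp (1/8) := Real.exp_le_exp.mpr h4
    have h6 : Real.exp (1/8) ≤ 5/4 := by
      by_contra hcon
      push_neg at hcon
      have h7 : ((5:ℝ)/4)^(8:ℕ) < Real.exp (1/8) ^ (8:ℕ) :=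
        pow_lt_pow_left₀ hcon (by norm_num) (by norm_num)
      rw [← Real.exp_nat_mul] at h7
      norm_num at h7
      have h8 := Real.exp_one_lt_d9
      linarith
    linarith
  have hq4 : (1+r)^(n-1) - 1 ≤ 1/4 := by linarith
  -- the basic geometric estimate
  have hMball : ∀ u v : ℂ, ‖u - 1‖ ≤ r → ‖v - 1‖ ≤ r →
      ‖(u - v) - (u^n - v^n)/(n:ℂ)‖ ≤ (1/4)*‖u - v‖ := by
    intro u v hu hv
    have hgs : (∑ i ∈ Finset.range n, u^i * v^(n-1-i)) * (u - v) = u^n - v^n :=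
      geom_sum₂_mul u v n
    have hkey : (u - v) - (u^n - v^n)/(n:ℂ)
        = ((∑ i ∈ Finset.range n, ((1:ℂ) - u^i * v^(n-1-i))) * (u-v))/(n:ℂ) := by
      have hsum : ∑ i ∈ Finset.range n, ((1:ℂ) - u^i * v^(n-1-i))
          = (n:ℂ) - ∑ i ∈ Finset.range n, u^i * v^(n-1-i) := by
        rw [Finset.sum_sub_distrib, Finset.sum_const, Finset.card_range, nsmul_eq_mul, mul_one]
      rw [hsum, sub_mul, ← hgs]
      field_simp
    have hS : ‖∑ i ∈ Finset.range n, ((1:ℂ) - u^i * v^(n-1-i))‖ ≤ (n:ℝ) * (1/4) := by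
      calc ‖∑ i ∈ Finset.range n, ((1:ℂ) - u^i * v^(n-1-i))‖
          ≤ ∑ i ∈ Finset.range n, ‖(1:ℂ) - u^i * v^(n-1-i)‖ := norm_sum_le _ _
        _ ≤ ∑ _i ∈ Finset.range n, (1/4:ℝ) := by
            apply Finset.sum_le_sum
            intro i hi
            have hin : i + (n-1-i) = n-1 := by
              have := Finset.mem_range.mp hi; omega
            rw [norm_sub_rev]
            calc ‖u^i * v^(n-1-i) - 1‖ ≤ (1+r)^(i+(n-1-i)) - 1 := prodPowBound hu hv i (n-1-i)
              _ = (1+r)^(n-1) - 1 := by rw [hin]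
              _ ≤ 1/4 := hq4
        _ = (n:ℝ) * (1/4) := by rw [Finset.sum_const, Finset.card_range, nsmul_eq_mul]
    rw [hkey, norm_div, norm_mul]
    have hnn : ‖(n:ℂ)‖ = (n:ℝ) := by simp
    rw [hnn]
    calc ‖∑ i ∈ Finset.range n, ((1:ℂ) - u^i * v^(n-1-i))‖ * ‖u-v‖ / (n:ℝ)
        ≤ ((n:ℝ) * (1/4)) * ‖u-v‖ / (n:ℝ) := by gcongr
      _ = (1/4)*‖u-v‖ := by field_simp
  -- Lipschitz bound for E on small balls around unit vectors
  have hmulK : ∀ z₀ u : ℂ, ‖z₀‖ = 1 → ‖u - 1‖ ≤ r → z₀ * u ∈ K := by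
    intro z₀ u h1 h2
    have h3 : |‖u‖ - 1| ≤ r := by
      have h4 := abs_norm_sub_norm_le u 1
      rw [norm_one] at h4
      exact h4.trans h2
    have h5 := abs_le.mp h3
    rw [hmemK, norm_mul, h1, one_mul]
    constructor <;> [linarith [hr16]; linarith [hr16]]
  have hmulU : ∀ z₀ u : ℂ, ‖z₀‖ = 1 → ‖u - 1‖ ≤ r → z₀ * u ∈ U :=
    fun z₀ u h1 h2 => hKU (hmulK z₀ u h1 h2)
  have hElip : ∀ z₀ : ℂ, ‖z₀‖ = 1 → ∀ u v : ℂ, ‖u - 1‖ ≤ r → ‖v - 1‖ ≤ r →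
      ‖E (z₀*u) - E (z₀*v)‖ ≤ 2*ε₀*‖z₀*u - z₀*v‖ := by
    intro z₀ hz₀ u v hu hv
    have hball : Metric.closedBall z₀ r ⊆ K := by
      intro w hw
      rw [Metric.mem_closedBall] at hw
      have h1 : |‖w‖ - ‖z₀‖| ≤ ‖w - z₀‖ := abs_norm_sub_norm_le _ _
      rw [hz₀, ← dist_eq_norm] at h1
      have h2 := abs_le.mp (h1.trans hw)
      rw [hmemK]
      constructor <;> [linarith [hr16]; linarith [hr16]]
    have hmem : ∀ x : ℂ, ‖x - 1‖ ≤ r → z₀*x ∈ Metric.closedBall z₀ r := by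
      intro x hx
      rw [Metric.mem_closedBall, dist_eq_norm]
      calc ‖z₀*x - z₀‖ = ‖z₀‖*‖x - 1‖ := by rw [← norm_mul, mul_sub, mul_one]
        _ ≤ r := by rw [hz₀, one_mul]; exact hx
    have hder : ∀ x ∈ Metric.closedBall z₀ r,
        HasFDerivWithinAt E (P.comp (fderiv ℝ (φ k) x) - P.comp (fderiv ℝ Φ x))
          (Metric.closedBall z₀ r) x :=
      fun x hx => (hEdiffU x (hKU (hball hx))).hasFDerivWithinAt
    have hbd : ∀ x ∈ Metric.closedBall z₀ r,
        ‖P.comp (fderiv ℝ (φ k) x) - P.comp (fderiv ℝ Φ x)‖ ≤ 2*ε₀ :=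
      fun x hx => hE1 x (hball hx)
    exact (convex_closedBall z₀ r).norm_image_sub_le_of_norm_hasFDerivWithin_le
      hder hbd (hmem v hv) (hmem u hu)
  -- the rotations and the Newton map
  set A : ℕ → ℝ → ℂ :=
    fun j θ => Complex.exp ((((θ + 2*π*(j:ℝ))/(n:ℝ) : ℝ) : ℂ) * Complex.I) with hAdef
  set eC : ℝ → ℂ := fun θ => Complex.exp ((θ:ℂ) * Complex.I) with heCdef
  have hA1 : ∀ j θ, ‖A j θ‖ = 1 := by
    intro j θ; simp only [hAdef]; exact Complex.norm_exp_ofReal_mul_I _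
  have heC1 : ∀ θ, ‖eC θ‖ = 1 := by
    intro θ; simp only [heCdef]; exact Complex.norm_exp_ofReal_mul_I _
  have heCne : ∀ θ, eC θ ≠ 0 := by intro θ; simp only [heCdef]; exact Complex.exp_ne_zero _
  have hApow : ∀ j θ, (A j θ)^n = eC θ := by
    intro j θ
    simp only [hAdef, heCdef]
    rw [← Complex.exp_nat_mul]
    have h1 : (n:ℂ) * ((((θ + 2*π*(j:ℝ))/(n:ℝ) : ℝ):ℂ) * Complex.I)
        = (θ:ℂ)*Complex.I + (j:ℕ) * (2*(π:ℂ)*Complex.I) := by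
      push_cast
      field_simp [hnne]
    rw [h1, Complex.exp_add, Complex.exp_nat_mul, Complex.exp_two_pi_mul_I, one_pow, mul_one]
  have hcabs : ∀ θ, ‖((n:ℂ) * eC θ)⁻¹‖ = 1/(n:ℝ) := by
    intro θ
    rw [norm_inv, norm_mul, heC1, mul_one]
    simp
  set T : ℕ → ℝ → ℂ → ℂ :=
    fun j θ u => u - ((n:ℂ) * eC θ)⁻¹ * (F (A j θ * u) - eC θ) with hTdef
  have hAK : ∀ j θ, A j θ ∈ K := by
    intro j θ
    have h1 := hmulK (A j θ) 1 (hA1 j θ) (by simp [hrpos.le])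
    rwa [mul_one] at h1
  -- the contraction estimate
  have hTlip : ∀ j θ u v, ‖u - 1‖ ≤ r → ‖v - 1‖ ≤ r →
      ‖T j θ u - T j θ v‖ ≤ (1/2) * ‖u - v‖ := by
    intro j θ u v hu hv
    have hid : T j θ u - T j θ v
        = ((u - v) - (u^n - v^n)/(n:ℂ))
          - ((n:ℂ)*eC θ)⁻¹ * (E (A j θ * u) - E (A j θ * v)) := by
      have hpu : (A j θ * u)^n = eC θ * u^n := by rw [mul_pow, hApow]
      have hpv : (A j θ * v)^n = eC θ * v^n := by rw [mul_pow, hApow]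
      simp only [hTdef, hEdef]
      rw [hpu, hpv]
      field_simp [hnne, heCne θ]
      ring
    rw [hid]
    have h2 := hElip (A j θ) (hA1 j θ) u v hu hv
    have h3 : ‖A j θ * u - A j θ * v‖ = ‖u - v‖ := by
      rw [← mul_sub, norm_mul, hA1, one_mul]
    rw [h3] at h2
    have h4 : ‖((n:ℂ)*eC θ)⁻¹ * (E (A j θ * u) - E (A j θ * v))‖ ≤ (1/(n:ℝ))*(2*ε₀*‖u-v‖) := by
      rw [norm_mul, hcabs]
      exact mul_le_mul_of_nonneg_left h2 (by positivity)
    have h5 : (1/(n:ℝ))*(2*ε₀) ≤ 1/4 := by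
      rw [hε₀def]
      have he : (1/(n:ℝ))*(2*(1/(100*(n:ℝ)))) = 1/(50*(n:ℝ)^2) := by
        field_simp
        ring
      rw [he, div_le_div_iff₀ (by positivity) (by norm_num)]
      nlinarith
    refine (norm_sub_le _ _).trans ?_
    have h6 := mul_le_mul_of_nonneg_right h5 (norm_nonneg (u-v))
    have h7 : (1/(n:ℝ))*(2*ε₀*‖u-v‖) = ((1/(n:ℝ))*(2*ε₀))*‖u-v‖ := by ring
    rw [h7] at h4
    have h8 := hMball u v hu hv
    linarith
  have hT1 : ∀ j θ, ‖T j θ 1 - 1‖ ≤ 2*ε₀ := by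
    intro j θ
    have he : T j θ 1 - 1 = -(((n:ℂ)*eC θ)⁻¹ * E (A j θ)) := by
      simp only [hTdef, hEdef, mul_one]
      rw [hApow]
      ring
    rw [he, norm_neg, norm_mul, hcabs]
    have h1 := hE0 (A j θ) (hAK j θ)
    have h2 : 1/(n:ℝ) ≤ 1 := by rw [div_le_one hnpos]; linarith
    calc (1/(n:ℝ)) * ‖E (A j θ)‖ ≤ 1 * (2*ε₀) :=
        mul_le_mul h2 h1 (norm_nonneg _) (by norm_num)
      _ = 2*ε₀ := one_mul _
  have hTball : ∀ j θ u, u ∈ Metric.closedBall (1:ℂ) r → T j θ u ∈ Metric.closedBall (1:ℂ) r := by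
    intro j θ u hu
    rw [Metric.mem_closedBall, dist_eq_norm] at hu ⊢
    have h1 := hTlip j θ u 1 hu (by simp [hrpos.le])
    have hnum : (1/2)*r + 2*ε₀ ≤ r := by
      rw [hrdef, hε₀def]
      have he : (1/2)*(1/(8*(n:ℝ))) + 2*(1/(100*(n:ℝ))) = 33/(400*(n:ℝ)) := by
        field_simp
        ring
      rw [he, div_le_div_iff₀ (by positivity) (by positivity)]
      linarith
    have h2 : T j θ u - 1 = (T j θ u - T j θ 1) + (T j θ 1 - 1) := by ring
    calc ‖T j θ u - 1‖ ≤ ‖T j θ u - T j θ 1‖ + ‖T j θ 1 - 1‖ := by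
          rw [h2]; exact norm_add_le _ _
      _ ≤ (1/2)*‖u - 1‖ + 2*ε₀ := add_le_add h1 (hT1 j θ)
      _ ≤ (1/2)*r + 2*ε₀ := by linarith
      _ ≤ r := hnum
  -- existence of fixed points
  have hexists : ∀ j θ, ∃ u : ℂ, u ∈ Metric.closedBall (1:ℂ) r ∧ T j θ u = u := by
    intro j θ
    have hsc : IsComplete (Metric.closedBall (1:ℂ) r) := Metric.isClosed_closedBall.isComplete
    have hsf : Set.MapsTo (T j θ) (Metric.closedBall (1:ℂ) r) (Metric.closedBall (1:ℂ) r) :=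
      fun u hu => hTball j θ u hu
    have hcw : ContractingWith (1/2 : NNReal) (hsf.restrict (T j θ) _ _) := by
      refine ⟨by rw [← NNReal.coe_lt_coe]; push_cast; norm_num, ?_⟩
      apply LipschitzWith.of_dist_le_mul
      intro x y
      have hx : ‖(x:ℂ) - 1‖ ≤ r := by
        have h := x.2; rwa [Metric.mem_closedBall, dist_eq_norm] at h
      have hy : ‖(y:ℂ) - 1‖ ≤ r := by
        have h := y.2; rwa [Metric.mem_closedBall, dist_eq_norm] at h
      have h1 := hTlip j θ (x:ℂ) (y:ℂ) hx hy
      rw [Subtype.dist_eq, Subtype.dist_eq, dist_eq_norm, dist_eq_norm]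
      simp only [Set.MapsTo.val_restrict_apply]
      have hco : ((1/2 : NNReal) : ℝ) = 1/2 := by norm_num
      rw [hco]
      exact h1
    have hm1 : (1:ℂ) ∈ Metric.closedBall (1:ℂ) r := Metric.mem_closedBall_self hrpos.le
    have hed : edist (1:ℂ) (T j θ 1) ≠ ⊤ := edist_ne_top _ _
    exact ⟨ContractingWith.efixedPoint' (T j θ) hsc hsf hcw 1 hm1 hed,
      ContractingWith.efixedPoint_mem' hsc hsf hcw hm1 hed,
      ContractingWith.efixedPoint_isFixedPt' hsc hsf hcw hm1 hed⟩
  choose uu huum huufix using hexists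
  have huball : ∀ j θ, ‖uu j θ - 1‖ ≤ r := by
    intro j θ
    have h := huum j θ
    rwa [Metric.mem_closedBall, dist_eq_norm] at h
  -- uniqueness of fixed points in the ball
  have huniq : ∀ j θ u v, ‖u - 1‖ ≤ r → ‖v - 1‖ ≤ r → T j θ u = u → T j θ v = v → u = v := by
    intro j θ u v hu hv hfu hfv
    have h1 := hTlip j θ u v hu hv
    rw [hfu, hfv] at h1
    have h2 : ‖u - v‖ ≤ 0 := by linarith
    have h3 : ‖u - v‖ = 0 := le_antisymm h2 (norm_nonneg _)
    exact sub_eq_zero.mp (norm_eq_zero.mp h3)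
  set ζ : ℕ → ℝ → ℂ := fun j θ => A j θ * uu j θ with hζdef
  have hζK : ∀ j θ, ζ j θ ∈ K := by
    intro j θ; simp only [hζdef]; exact hmulK _ _ (hA1 j θ) (huball j θ)
  have hζU : ∀ j θ, ζ j θ ∈ U := fun j θ => hKU (hζK j θ)
  have hFζ : ∀ j θ, F (ζ j θ) = eC θ := by
    intro j θ
    have h1 := huufix j θ
    simp only [hTdef] at h1
    have h2 := sub_eq_self.mp h1
    rcases mul_eq_zero.mp h2 with h3 | h3
    · exact absurd h3 (inv_ne_zero (mul_ne_zero hnne (heCne θ)))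
    · simp only [hζdef]
      exact sub_eq_zero.mp h3
  -- monodromy and periodicity
  have hAmono : ∀ j, A j (2*π) = A (j+1) 0 := by
    intro j
    simp only [hAdef]
    congr 1
    push_cast
    ring
  have heCmono : eC (2*π) = eC 0 := by
    simp only [heCdef]
    have h1 : ((2*π : ℝ):ℂ) * Complex.I = 2*(π:ℂ)*Complex.I := by push_cast; ring
    rw [h1, Complex.exp_two_pi_mul_I]
    simp
  have hAper : ∀ j θ, A (j+n) θ = A j θ := by
    intro j θ
    simp only [hAdef]
    have h1 : (((θ + 2*π*((j+n:ℕ):ℝ))/(n:ℝ) : ℝ):ℂ) * Complex.I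
        = (((θ + 2*π*((j:ℕ):ℝ))/(n:ℝ) : ℝ):ℂ) * Complex.I + 2*(π:ℂ)*Complex.I := by
      push_cast
      field_simp [hnne]
      ring
    rw [h1, Complex.exp_add, Complex.exp_two_pi_mul_I, mul_one]
  have hTmono : ∀ j u, T j (2*π) u = T (j+1) 0 u := by
    intro j u; simp only [hTdef]; rw [hAmono, heCmono]
  have huumono : ∀ j, uu j (2*π) = uu (j+1) 0 := by
    intro j
    refine huniq (j+1) 0 _ _ (huball j (2*π)) (huball (j+1) 0) ?_ (huufix (j+1) 0)
    rw [← hTmono j]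
    exact huufix j (2*π)
  have hTper : ∀ j θ u, T (j+n) θ u = T j θ u := by
    intro j θ u; simp only [hTdef]; rw [hAper]
  have huuper : ∀ j θ, uu (j+n) θ = uu j θ := by
    intro j θ
    refine huniq j θ _ _ (huball (j+n) θ) (huball j θ) ?_ (huufix j θ)
    rw [← hTper j θ]
    exact huufix (j+n) θ
  have hζmono : ∀ j, ζ j (2*π) = ζ (j+1) 0 := by
    intro j; simp only [hζdef]; rw [hAmono, huumono]
  have hζper : ∀ j θ, ζ (j+n) θ = ζ j θ := by
    intro j θ; simp only [hζdef]; rw [hAper, huuper]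
  -- continuity
  have hAcont : ∀ j, Continuous (fun θ => A j θ) := by
    intro j
    simp only [hAdef]
    apply Complex.continuous_exp.comp
    apply Continuous.mul _ continuous_const
    apply Complex.continuous_ofReal.comp
    exact (continuous_id.add continuous_const).div_const _
  have heCcont : Continuous eC := by
    simp only [heCdef]
    exact Complex.continuous_exp.comp (Complex.continuous_ofReal.mul continuous_const)
  have hTcont : ∀ (j : ℕ) (x : ℂ), x ∈ Metric.closedBall (1:ℂ) r →
      Continuous (fun θ => T j θ x) := by
    intro j x hx
    have hxr : ‖x - 1‖ ≤ r := by rwa [Metric.mem_closedBall, dist_eq_norm] at hx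
    rw [continuous_iff_continuousAt]
    intro θ₀
    have hFcOn : ContinuousOn F U := by
      simp only [hFdef]
      exact P.continuous.comp_continuousOn hφcontOn
    have hFc : ContinuousAt F (A j θ₀ * x) :=
      hFcOn.continuousAt (hUopen.mem_nhds (hmulU _ _ (hA1 j θ₀) hxr))
    have hmulc : ContinuousAt (fun θ : ℝ => A j θ * x) θ₀ :=
      ((hAcont j).mul continuous_const).continuousAt
    have h2 : ContinuousAt (fun θ => F (A j θ * x)) θ₀ :=
      ContinuousAt.comp (f := fun θ : ℝ => A j θ * x) hFc hmulc
    simp only [hTdef]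
    exact continuousAt_const.sub ((((continuous_const.mul heCcont).continuousAt).inv₀
      (mul_ne_zero hnne (heCne θ₀))).mul (h2.sub heCcont.continuousAt))
  have huucont : ∀ j, Continuous (fun θ => uu j θ) := by
    intro j
    rw [continuous_iff_continuousAt]
    intro θ₀
    have hb : ∀ θ, dist (uu j θ) (uu j θ₀) ≤ 2 * dist (T j θ (uu j θ₀)) (T j θ₀ (uu j θ₀)) := by
      intro θ
      have h1 : ‖uu j θ₀ - uu j θ‖ ≤ ‖uu j θ₀ - T j θ (uu j θ₀)‖ + ‖T j θ (uu j θ₀) - uu j θ‖ := by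
        have he : uu j θ₀ - uu j θ
            = (uu j θ₀ - T j θ (uu j θ₀)) + (T j θ (uu j θ₀) - uu j θ) := by ring
        rw [he]; exact norm_add_le _ _
      have h2 : ‖T j θ (uu j θ₀) - uu j θ‖ ≤ (1/2)*‖uu j θ₀ - uu j θ‖ := by
        have h3 := hTlip j θ (uu j θ₀) (uu j θ) (huball j θ₀) (huball j θ)
        rwa [huufix j θ] at h3
      have h4 : ‖uu j θ₀ - uu j θ‖ ≤ 2*‖uu j θ₀ - T j θ (uu j θ₀)‖ := by linarith
      rw [dist_eq_norm, dist_eq_norm]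
      calc ‖uu j θ - uu j θ₀‖ = ‖uu j θ₀ - uu j θ‖ := by rw [norm_sub_rev]
        _ ≤ 2*‖uu j θ₀ - T j θ (uu j θ₀)‖ := h4
        _ = 2*‖T j θ (uu j θ₀) - T j θ₀ (uu j θ₀)‖ := by rw [huufix j θ₀, norm_sub_rev]
    have hcT : Continuous (fun θ => 2 * dist (T j θ (uu j θ₀)) (T j θ₀ (uu j θ₀))) :=
      continuous_const.mul ((hTcont j (uu j θ₀) (huum j θ₀)).dist continuous_const)
    have hlim : Tendsto (fun θ => dist (uu j θ) (uu j θ₀)) (𝓝 θ₀) (𝓝 0) := by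
      apply squeeze_zero (fun θ => dist_nonneg) hb
      have h4 := hcT.tendsto θ₀
      have h5 : 2 * dist (T j θ₀ (uu j θ₀)) (T j θ₀ (uu j θ₀)) = 0 := by simp
      rwa [h5] at h4
    exact tendsto_iff_dist_tendsto_zero.mpr hlim
  have hζcont : ∀ j, Continuous (fun θ => ζ j θ) := by
    intro j; simp only [hζdef]; exact (hAcont j).mul (huucont j)
  -- the height functions
  set H : ℕ → ℝ → ℝ := fun j θ => φ k (ζ j θ) 2 with hHdef
  have hHcont : ∀ j, Continuous (fun θ => H j θ) := by
    intro j
    rw [continuous_iff_continuousAt]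
    intro θ₀
    have h1 : ContinuousAt (φ k) (ζ j θ₀) := hφcontOn.continuousAt (hUopen.mem_nhds (hζU j θ₀))
    have h2 : ContinuousAt (fun v : V3 => v 2) (φ k (ζ j θ₀)) :=
      (continuous_apply (2 : Fin 3)).continuousAt
    simp only [hHdef]
    have h3 : ContinuousAt (fun θ => φ k (ζ j θ)) θ₀ :=
      ContinuousAt.comp (f := fun θ => ζ j θ) h1 (hζcont j).continuousAt
    exact ContinuousAt.comp (f := fun θ => φ k (ζ j θ)) h2 h3
  have hHeq : ∀ j θ p θ', ζ j θ = ζ p θ' → H j θ = H p θ' := by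
    intro j θ p θ' e; simp only [hHdef]; rw [e]
  -- equal heights force equal points
  have hheq : ∀ θ p q, H p θ = H q θ → ζ p θ = ζ q θ := by
    intro θ p q hpq
    apply hinjU (hζU p θ) (hζU q θ)
    have hP : P (φ k (ζ p θ)) = P (φ k (ζ q θ)) := by
      have e1 : P (φ k (ζ p θ)) = F (ζ p θ) := by simp only [hFdef]
      have e2 : P (φ k (ζ q θ)) = F (ζ q θ) := by simp only [hFdef]
      rw [e1, e2, hFζ, hFζ]
    simp only [hHdef] at hpq
    funext i
    fin_cases i
    · have h1 := congrArg Complex.re hP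
      rw [hPre, hPre] at h1
      exact h1
    · have h1 := congrArg Complex.im hP
      rw [hPim, hPim] at h1
      exact h1
    · exact hpq
  -- separation of the sheets
  have hAsep : ∀ θ p q, p < q → q < n → 4/(n:ℝ) ≤ ‖A p θ - A q θ‖ := by
    intro θ p q hpq hq
    have hfac : A q θ
        = A p θ * Complex.exp (((2*π*((q-p:ℕ):ℝ)/(n:ℝ) : ℝ):ℂ) * Complex.I) := by
      simp only [hAdef]
      rw [← Complex.exp_add]
      congr 1
      push_cast [Nat.cast_sub hpq.le]
      field_simp [hnne]
      ring
    rw [hfac]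
    have e1 : A p θ - A p θ * Complex.exp (((2*π*((q-p:ℕ):ℝ)/(n:ℝ) : ℝ):ℂ) * Complex.I)
        = -(A p θ * (Complex.exp (((2*π*((q-p:ℕ):ℝ)/(n:ℝ) : ℝ):ℂ) * Complex.I) - 1)) := by
      ring
    rw [e1, norm_neg, norm_mul, hA1, one_mul]
    exact sepAux hn2 (by omega : 1 ≤ q - p) (by omega : q - p < n)
  have hζsep : ∀ θ p q, p < q → q < n → ζ p θ ≠ ζ q θ := by
    intro θ p q hpq hq heq
    simp only [hζdef] at heq
    have h2 : A p θ - A q θ = A q θ * (uu q θ - 1) - A p θ * (uu p θ - 1) := by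
      linear_combination heq
    have h3 : ‖A p θ - A q θ‖ ≤ 2*r := by
      rw [h2]
      calc ‖A q θ * (uu q θ - 1) - A p θ * (uu p θ - 1)‖
          ≤ ‖A q θ * (uu q θ - 1)‖ + ‖A p θ * (uu p θ - 1)‖ := norm_sub_le _ _
        _ ≤ r + r := by
            rw [norm_mul, norm_mul, hA1, hA1, one_mul, one_mul]
            exact add_le_add (huball q θ) (huball p θ)
        _ = 2*r := by ring
    have h4 := (hAsep θ p q hpq hq).trans h3
    rw [hrdef] at h4
    have h5 := mul_le_mul_of_nonneg_right h4 hnpos.le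
    have e1 : (4/(n:ℝ))*(n:ℝ) = 4 := by field_simp
    have e2 : (2*(1/(8*(n:ℝ))))*(n:ℝ) = 1/4 := by field_simp; ring
    rw [e1, e2] at h5
    linarith
  -- endgame
  have hζn : ∀ θ, ζ n θ = ζ 0 θ := by intro θ; simpa using hζper 0 θ
  have hgne : ∀ j, j < n → ∀ θ, H j θ ≠ H (j+1) θ := by
    intro j hj θ heq
    by_cases hj1 : j + 1 < n
    · exact hζsep θ j (j+1) (Nat.lt_succ_self j) hj1 (hheq θ j (j+1) heq)
    · have hjn : j + 1 = n := by omega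
      have hj0 : 0 < j := by omega
      have e2 : H (j+1) θ = H 0 θ := hHeq (j+1) θ 0 θ (by rw [hjn]; exact hζn θ)
      have heq' : H 0 θ = H j θ := (heq.trans e2).symm
      exact hζsep θ 0 j hj0 hj (hheq θ 0 j heq')
  set sgn : ℕ → ℝ := fun j => H j 0 - H (j+1) 0 with hsgndef
  have hsiff : ∀ j, j < n → ((0 < sgn j) ↔ (0 < sgn (j+1))) := by
    intro j hj
    have hg : Continuous (fun θ => H j θ - H (j+1) θ) := (hHcont j).sub (hHcont (j+1))
    have hne : ∀ θ, H j θ - H (j+1) θ ≠ 0 := fun θ => sub_ne_zero.mpr (hgne j hj θ)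
    have hIVT := sign_iff_of_ne (by positivity : (0:ℝ) ≤ 2*π) hg hne
    have e1 : H j (2*π) = H (j+1) 0 := hHeq j (2*π) (j+1) 0 (hζmono j)
    have e2 : H (j+1) (2*π) = H (j+1+1) 0 := hHeq (j+1) (2*π) (j+1+1) 0 (hζmono (j+1))
    rw [e1, e2] at hIVT
    simp only [hsgndef]
    exact hIVT
  have hchain : ∀ j, j ≤ n → ((0 < sgn 0) ↔ (0 < sgn j)) := by
    intro j
    induction j with
    | zero => intro _; exact Iff.rfl
    | succ i ih => intro hij; exact (ih (by omega)).trans (hsiff i (by omega))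
  have hsumz : ∑ j ∈ Finset.range n, sgn j = 0 := by
    have h1 : ∑ j ∈ Finset.range n, (H j 0 - H (j+1) 0) = H 0 0 - H n 0 :=
      Finset.sum_range_sub' (fun j => H j 0) n
    have h2 : H n 0 = H 0 0 := hHeq n 0 0 0 (hζn 0)
    simp only [hsgndef]
    rw [h1, h2, sub_self]
  have hs0 : sgn 0 ≠ 0 := by
    simp only [hsgndef]
    exact sub_ne_zero.mpr (hgne 0 (by omega) 0)
  rcases hs0.lt_or_gt with hneg | hpos
  · have hall : ∀ j ∈ Finset.range n, sgn j < 0 := by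
      intro j hj
      have hj' := Finset.mem_range.mp hj
      have h1 : sgn j ≠ 0 := by simp only [hsgndef]; exact sub_ne_zero.mpr (hgne j hj' 0)
      rcases h1.lt_or_gt with h | h
      · exact h
      · exact absurd ((hchain j hj'.le).mpr h) (by simp only [not_lt]; linarith)
    have hcon := Finset.sum_neg hall ⟨0, Finset.mem_range.mpr (by omega)⟩
    rw [hsumz] at hcon
    exact lt_irrefl _ hcon
  · have hall : ∀ j ∈ Finset.range n, 0 < sgn j := by
      intro j hj
      exact (hchain j (Finset.mem_range.mp hj).le).mp hpos
    have hcon := Finset.sum_pos hall ⟨0, Finset.mem_range.mpr (by omega)⟩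
    rw [hsumz] at hcon
    exact lt_irrefl _ hcon
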